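/- Let A be a finite-dimensional normed vector space over ℂ, let π : A → A be a continuous linear projection (π ∘ π = π) with image q, let K ⊆ ker π be a linear subspace, and let T : A → A be a continuous linear map such that T(q + K) ⊆ q + K and π(T k) = 0 for all k ∈ K. Then for every u ∈ q, π(exp(T) u) = exp(π ∘ T) u, where exp denotes the operator exponential exp(S) = Σ_{n≥0} S^n / n!. -/

import Mathlib

/-- Let `A` be a finite-dimensional normed vector space over `ℂ`,
`π : A → A` a continuous linear projection (`π ∘ π = π`) with image `q`, `K ⊆ ker π` a
linear subspace, and `T : A → A` a continuous linear map with `T (q + K) ⊆ q + K` and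
`π (T x) = 0` for all `x ∈ K`.  Then for every `u ∈ q`,
`π (exp T u) = exp (π ∘ T) u`, where `exp` is the operator exponential. -/
theorem stmt2 {A : Type*} [NormedAddCommGroup A] [NormedSpace ℂ A] [FiniteDimensional ℂ A]
    (π T : A →L[ℂ] A) (q K : Submodule ℂ A)
    (hidem : π ∘L π = π)
    (hrange : LinearMap.range (π : A →ₗ[ℂ] A) = q)
    (hK : K ≤ LinearMap.ker (π : A →ₗ[ℂ] A))
    (hT : ∀ x ∈ q ⊔ K, T x ∈ q ⊔ K)
    (hTK : ∀ x ∈ K, π (T x) = 0) :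
    ∀ u ∈ q, π (NormedSpace.exp T u) = NormedSpace.exp (π ∘L T) u := by
  -- π fixes elements of q
  have hfix : ∀ a ∈ q, π a = a := by
    intro a ha
    rw [← hrange] at ha
    obtain ⟨b, rfl⟩ := ha
    have := congrArg (fun f : A →L[ℂ] A => f b) hidem
    simpa using this
  have hπmem : ∀ x : A, π x ∈ q := by
    intro x; rw [← hrange]; exact ⟨x, rfl⟩
  -- On q ⊔ K, π ∘ T = π ∘ T ∘ π
  have hkey : ∀ x ∈ q ⊔ K, π (T x) = π (T (π x)) := by
    intro x hx
    obtain ⟨a, ha, k, hk, rfl⟩ := Submodule.mem_sup.mp hx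
    have hπk : π k = 0 := hK hk
    simp only [map_add, hTK k hk, hfix a ha, hπk, add_zero]
  -- Main induction: π (T^n x) = (π ∘L T)^n (π x) for x ∈ q ⊔ K
  have hmain : ∀ n : ℕ, ∀ x ∈ q ⊔ K, (T ^ n) x ∈ q ⊔ K ∧ π ((T ^ n) x) = ((π ∘L T) ^ n) (π x) := by
    intro n
    induction n with
    | zero => intro x hx; simpa using hx
    | succ n ih =>
      intro x hx
      obtain ⟨hmem, heq⟩ := ih x hx
      constructor
      · rw [pow_succ', ContinuousLinearMap.mul_apply]
        exact hT _ hmem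
      · rw [pow_succ', pow_succ', ContinuousLinearMap.mul_apply, ContinuousLinearMap.mul_apply,
          hkey _ hmem, heq]
        rfl
  intro u hu
  have huP : u ∈ q ⊔ K := Submodule.mem_sup_left hu
  simp only [NormedSpace.exp_eq_tsum ℂ]
  have hsum : Summable fun n : ℕ => (↑n.factorial : ℂ)⁻¹ • T ^ n :=
    NormedSpace.expSeries_summable' T
  have hsum2 : Summable fun n : ℕ => (↑n.factorial : ℂ)⁻¹ • (π ∘L T) ^ n :=
    NormedSpace.expSeries_summable' (π ∘L T)
  have h1 : (∑' n : ℕ, (↑n.factorial : ℂ)⁻¹ • T ^ n) u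
      = ∑' n : ℕ, (↑n.factorial : ℂ)⁻¹ • ((T ^ n) u) :=
    ((ContinuousLinearMap.apply ℂ A u).map_tsum hsum).trans
      (tsum_congr fun n => by simp)
  have h2 : (∑' n : ℕ, (↑n.factorial : ℂ)⁻¹ • (π ∘L T) ^ n) u
      = ∑' n : ℕ, (↑n.factorial : ℂ)⁻¹ • (((π ∘L T) ^ n) u) :=
    ((ContinuousLinearMap.apply ℂ A u).map_tsum hsum2).trans
      (tsum_congr fun n => by simp)
  rw [h1, h2]
  have hsum3 : Summable fun n : ℕ => (↑n.factorial : ℂ)⁻¹ • ((T ^ n) u) := by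
    have := (ContinuousLinearMap.apply ℂ A u).summable hsum
    exact this.congr fun n => by simp
  rw [π.map_tsum hsum3]
  refine tsum_congr fun n => ?_
  rw [map_smul, (hmain n u huP).2, hfix u hu]
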